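/- Let m > 0, a > 0, ξ ∈ ℝ with m² + ξR > 0 where R = 6/a², let c = m²a² + 6ξ - 1 and l_n = sqrt((n+1)² + c), and let Y₁, Y₂ ∈ ℝ. There exists a sequence (a_n)_{n≥0} of nonnegative reals with m² Σ_n a_n = Y₁ and Σ_n a_n l_n²/a² = Y₂ if and only if (Y₁ = Y₂ = 0) or (m² Y₂ ≥ (m² + ξR) Y₁ > 0). -/

import Mathlib

/-- Massive solvability criterion for the semi-classical Einstein equation on the Einstein
static universe of radius `r`: with `R = 6/r²`, `c = m²r² + 6ξ - 1` and
`lₙ = √((n+1)² + c)`, there exists a sequence of nonnegative mode coefficients `aₙ` with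
`m² ∑ aₙ = Y₁` and `∑ aₙ lₙ²/r² = Y₂` (both series converging) if and only if
`Y₁ = Y₂ = 0` or `m² Y₂ ≥ (m² + ξR) Y₁ > 0`. -/
theorem massive_solvability (m r ξ Y₁ Y₂ : ℝ) (hm : 0 < m) (hr : 0 < r)
    (hpos : 0 < m ^ 2 + ξ * (6 / r ^ 2)) :
    (∃ a : ℕ → ℝ, (∀ n, 0 ≤ a n) ∧
        HasSum (fun n => m ^ 2 * a n) Y₁ ∧
        HasSum (fun n : ℕ =>
          a n * (Real.sqrt (((n : ℝ) + 1) ^ 2 + (m ^ 2 * r ^ 2 + 6 * ξ - 1))) ^ 2 / r ^ 2) Y₂)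
      ↔ (Y₁ = 0 ∧ Y₂ = 0) ∨
        (m ^ 2 * Y₂ ≥ (m ^ 2 + ξ * (6 / r ^ 2)) * Y₁ ∧
          0 < (m ^ 2 + ξ * (6 / r ^ 2)) * Y₁) := by
  have hr2 : (0:ℝ) < r ^ 2 := by positivity
  have hm2 : (0:ℝ) < m ^ 2 := by positivity
  set c : ℝ := m ^ 2 * r ^ 2 + 6 * ξ - 1 with hc
  have hc1 : 0 < c + 1 := by
    have h := mul_pos hpos hr2
    have he : (m ^ 2 + ξ * (6 / r ^ 2)) * r ^ 2 = c + 1 := by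
      field_simp [hc]; ring
    linarith [he ▸ h]
  have hK : m ^ 2 + ξ * (6 / r ^ 2) = (c + 1) / r ^ 2 := by
    field_simp [hc]; ring
  have h1n : ∀ n : ℕ, (1:ℝ) ≤ ((n:ℝ) + 1) ^ 2 := by
    intro n; nlinarith [(n.cast_nonneg : (0:ℝ) ≤ n)]
  have hsq : ∀ n : ℕ, (Real.sqrt (((n:ℝ) + 1) ^ 2 + c)) ^ 2 = ((n:ℝ) + 1) ^ 2 + c := by
    intro n; rw [Real.sq_sqrt]; linarith [h1n n]
  rw [hK]
  constructor
  · rintro ⟨a, ha, h1, h2⟩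
    simp only [hsq] at h2
    have hA : HasSum a (Y₁ / m ^ 2) := by
      have := h1.mul_left ((m ^ 2)⁻¹)
      simpa [div_eq_inv_mul, inv_mul_cancel_left₀ (ne_of_gt hm2)] using this
    have hY1nn : 0 ≤ Y₁ := by
      have h0 : 0 ≤ Y₁ / m ^ 2 := hA.nonneg ha
      have := mul_nonneg h0 hm2.le
      rwa [div_mul_cancel₀ _ (ne_of_gt hm2)] at this
    rcases eq_or_lt_of_le hY1nn with hY1 | hY1
    · left
      have hA0 : HasSum a 0 := by rw [← hY1] at hA; simpa using hA
      have haz : ∀ n, a n = 0 := by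
        have := (hasSum_zero_iff_of_nonneg ha).mp hA0
        intro n; exact congrFun this n
      refine ⟨hY1.symm, ?_⟩
      have : HasSum (fun n : ℕ => a n * (((n:ℝ) + 1) ^ 2 + c) / r ^ 2) 0 := by
        simpa [haz] using (hasSum_zero : HasSum (fun _ : ℕ => (0:ℝ)) 0)
      exact (h2.unique this)
    · right
      have hterm : ∀ n : ℕ, (c + 1) / r ^ 2 * (m ^ 2 * a n)
          ≤ m ^ 2 * (a n * (((n:ℝ) + 1) ^ 2 + c) / r ^ 2) := by
        intro n
        have key : (c + 1) * (m ^ 2 * a n) ≤ m ^ 2 * (a n * (((n:ℝ) + 1) ^ 2 + c)) := by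
          nlinarith [mul_nonneg (mul_nonneg hm2.le (ha n)) (sub_nonneg.mpr (h1n n))]
        calc (c + 1) / r ^ 2 * (m ^ 2 * a n) = (c + 1) * (m ^ 2 * a n) / r ^ 2 := by ring
          _ ≤ m ^ 2 * (a n * (((n:ℝ) + 1) ^ 2 + c)) / r ^ 2 := by gcongr
          _ = m ^ 2 * (a n * (((n:ℝ) + 1) ^ 2 + c) / r ^ 2) := by ring
      have hle : (c + 1) / r ^ 2 * Y₁ ≤ m ^ 2 * Y₂ :=
        hasSum_le hterm (h1.mul_left _) (h2.mul_left _)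
      exact ⟨hle, by positivity⟩
  · rintro (⟨hY1, hY2⟩ | ⟨hge, hposY⟩)
    · refine ⟨0, fun n => le_refl 0, ?_, ?_⟩
      · simpa [hY1] using (hasSum_zero : HasSum (fun _ : ℕ => (0:ℝ)) 0)
      · simpa [hY2] using (hasSum_zero : HasSum (fun _ : ℕ => (0:ℝ)) 0)
    · -- construct two-mode solution
      have hY1pos : 0 < Y₁ := by
        by_contra h
        push_neg at h
        nlinarith [div_pos hc1 hr2]
      set A : ℝ := Y₁ / m ^ 2 with hAdef
      have hApos : 0 < A := by positivity
      set B : ℝ := r ^ 2 * Y₂ with hBdef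
      set D : ℝ := B - (c + 1) * A with hDdef
      have hDnn : 0 ≤ D := by
        have h := hge
        rw [ge_iff_le, div_mul_eq_mul_div, div_le_iff₀ hr2] at h
        have h' : (c + 1) * (Y₁ / m ^ 2) ≤ r ^ 2 * Y₂ := by
          rw [mul_div_assoc', div_le_iff₀ hm2]
          nlinarith
        rw [hDdef, hBdef, hAdef, sub_nonneg]
        exact h'
      obtain ⟨n, hn⟩ := exists_nat_ge (max 1 (D / A))
      have hn1 : (1:ℝ) ≤ n := le_trans (le_max_left _ _) hn
      have hn0 : n ≠ 0 := by
        intro h; rw [h] at hn1; norm_num at hn1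
      set d : ℝ := ((n:ℝ) + 1) ^ 2 - 1 with hddef
      have hdpos : 0 < d := by rw [hddef]; nlinarith
      have hdne : ((n:ℝ) + 1) ^ 2 - 1 ≠ 0 := by rw [← hddef]; exact hdpos.ne'
      have hDA : D / A ≤ (n:ℝ) := le_trans (le_max_right _ _) hn
      have hanA : D / d ≤ A := by
        rw [div_le_iff₀ hdpos]
        have h1 : D ≤ A * (n:ℝ) := by
          rw [div_le_iff₀ hApos] at hDA; linarith [hDA]
        have h2 : (n:ℝ) ≤ d := by
          have h3 : (0:ℝ) ≤ n := n.cast_nonneg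
          rw [hddef]; nlinarith
        nlinarith
      refine ⟨fun k => if k = 0 then A - D / d else if k = n then D / d else 0, ?_, ?_, ?_⟩
      · intro k
        rcases eq_or_ne k 0 with hk | hk
        · simp [hk]; linarith
        · rcases eq_or_ne k n with hk' | hk'
          · subst hk'
            simpa [hn0] using div_nonneg hDnn hdpos.le
          · simp [hk, hk']
      · have hfin : ∀ k ∉ ({0, n} : Finset ℕ),
            m ^ 2 * (if k = 0 then A - D / d else if k = n then D / d else 0) = 0 := by
          intro k hk
          simp only [Finset.mem_insert, Finset.mem_singleton, not_or] at hk
          simp [hk.1, hk.2]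
        have hS := hasSum_sum_of_ne_finset_zero (L := SummationFilter.unconditional ℕ) hfin
        convert hS using 1
        rw [Finset.sum_pair (by omega : (0:ℕ) ≠ n)]
        simp only [if_pos rfl, if_neg hn0, if_true]
        rw [hAdef]
        field_simp
        ring
      · simp only [hsq]
        have hfin : ∀ k ∉ ({0, n} : Finset ℕ),
            (if k = 0 then A - D / d else if k = n then D / d else 0) *
              (((k : ℝ) + 1) ^ 2 + c) / r ^ 2 = 0 := by
          intro k hk
          simp only [Finset.mem_insert, Finset.mem_singleton, not_or] at hk
          simp [hk.1, hk.2]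
        have hS := hasSum_sum_of_ne_finset_zero (L := SummationFilter.unconditional ℕ) hfin
        convert hS using 1
        rw [Finset.sum_pair (by omega : (0:ℕ) ≠ n)]
        simp only [if_pos rfl, if_neg hn0]
        have hda : D / d * d = D := div_mul_cancel₀ D hdpos.ne'
        have hnd : ((n:ℝ) + 1) ^ 2 + c = d + (1 + c) := by rw [hddef]; ring
        have hB : B = (c + 1) * A + D := by rw [hDdef]; ring
        have hY2 : Y₂ = B / r ^ 2 := by rw [hBdef]; field_simp
        rw [hnd, hY2, hB]
        push_cast
        rw [← add_div]
        congr 1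
        linear_combination -hda
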